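/- The set of critical values c₁({x : P(x) = 0}) is a discrete and closed subset of the subspace ℝ ∖ {0, −I}; that is, every accumulation point in ℝ of the set of critical values of c₁ lies in {0, −I}, and no critical value is an accumulation point of the set of critical values. -/

import Mathlib

open Filter MeasureTheory

open Set Topology


lemma aux_isolated {P : ℝ → ℝ} (hP : AnalyticOnNhd ℝ P Set.univ) (hPne : ∃ x : ℝ, P x ≠ 0)
    (z : ℝ) : ∀ᶠ x in 𝓝[≠] z, P x ≠ 0 := by
  rcases (hP z trivial).eventually_eq_zero_or_eventually_ne_zero with h | h
  · exact absurd (hP.eqOn_zero_of_preconnected_of_eventuallyEq_zero isPreconnected_univ trivial h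
      (trivial : hPne.choose ∈ univ)) hPne.choose_spec
  · exact h

lemma aux_exists_ne {P : ℝ → ℝ} (hP : AnalyticOnNhd ℝ P Set.univ) (hPne : ∃ x : ℝ, P x ≠ 0)
    {a b : ℝ} (hab : a < b) : ∃ x ∈ Ioo a b, P x ≠ 0 := by
  by_contra h
  push_neg at h
  set z := (a + b) / 2
  have hz : z ∈ Ioo a b := ⟨by simp [z]; linarith, by simp [z]; linarith⟩
  have h1 : ∀ᶠ x in 𝓝[≠] z, P x = 0 := by
    filter_upwards [nhdsWithin_le_nhds ((isOpen_Ioo).mem_nhds hz)] with x hx using h x hx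
  obtain ⟨x, hx1, hx2⟩ := (h1.and (aux_isolated hP hPne z)).exists
  exact hx2 hx1

lemma aux_finite {P : ℝ → ℝ} (hP : AnalyticOnNhd ℝ P Set.univ) (hPne : ∃ x : ℝ, P x ≠ 0)
    (a b : ℝ) : ({x : ℝ | P x = 0} ∩ Icc a b).Finite := by
  by_contra h
  rw [← Set.not_infinite, not_not] at h
  obtain ⟨z, _, hz⟩ := h.exists_accPt_of_subset_isCompact isCompact_Icc inter_subset_right
  rw [accPt_iff_frequently] at hz
  have h1 : ∃ᶠ x in 𝓝[≠] z, P x = 0 := by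
    rw [frequently_nhdsWithin_iff]
    exact hz.mono fun x hx => ⟨hx.2.1, hx.1⟩
  obtain ⟨x, hx1, hx2⟩ := (h1.and_eventually (aux_isolated hP hPne z)).exists
  exact hx2 hx1

lemma aux_cont {P : ℝ → ℝ} (hP : AnalyticOnNhd ℝ P Set.univ) :
    Continuous fun t : ℝ => Real.exp (-t ^ 2) * P t := by
  have hPc : Continuous P := continuous_iff_continuousAt.mpr fun x => (hP x trivial).continuousAt
  continuity

lemma aux_strict {P : ℝ → ℝ} (hP : AnalyticOnNhd ℝ P Set.univ)
    (hP0 : ∀ x : ℝ, 0 ≤ P x) (hPne : ∃ x : ℝ, P x ≠ 0)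
    (hInt : Integrable (fun t : ℝ => Real.exp (-t ^ 2) * P t)) :
    StrictMono fun x : ℝ => ∫ t in Iic x, Real.exp (-t ^ 2) * P t := by
  set f := fun t : ℝ => Real.exp (-t ^ 2) * P t with hf
  intro a b hab
  have key : (0:ℝ) < (∫ t in Iic b, f t) - ∫ t in Iic a, f t := by
    rw [intervalIntegral.integral_Iic_sub_Iic hInt.integrableOn hInt.integrableOn,
      intervalIntegral.integral_of_le hab.le]
    rw [setIntegral_pos_iff_support_of_nonneg_ae
      (ae_of_all _ fun t => mul_nonneg (Real.exp_pos _).le (hP0 t)) hInt.integrableOn]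
    obtain ⟨x, hx, hPx⟩ := aux_exists_ne hP hPne hab
    have hxs : x ∈ Function.support f ∩ Ioo a b :=
      ⟨by simp [hf, Function.mem_support, (Real.exp_pos _).ne', hPx], hx⟩
    calc (0:ENNReal) < volume (Function.support f ∩ Ioo a b) :=
          (((aux_cont hP).isOpen_support).inter isOpen_Ioo).measure_pos volume ⟨x, hxs⟩
      _ ≤ volume (Function.support f ∩ Ioc a b) :=
          measure_mono (inter_subset_inter_right _ Ioo_subset_Ioc_self)
  dsimp only
  linarith

lemma aux_top {P : ℝ → ℝ}
    (hInt : Integrable (fun t : ℝ => Real.exp (-t ^ 2) * P t)) :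
    Tendsto (fun x : ℝ => ∫ t in Iic x, Real.exp (-t ^ 2) * P t) atTop
      (𝓝 (∫ t : ℝ, Real.exp (-t ^ 2) * P t)) := by
  have h := tendsto_setIntegral_of_monotone (μ := volume)
    (f := fun t : ℝ => Real.exp (-t ^ 2) * P t) (s := fun x : ℝ => Iic x)
    (fun _ => measurableSet_Iic) (fun i j h => Iic_subset_Iic.2 h)
    (by rw [iUnion_Iic]; exact hInt.integrableOn)
  rwa [iUnion_Iic, Measure.restrict_univ] at h

lemma aux_bot {P : ℝ → ℝ}
    (hInt : Integrable (fun t : ℝ => Real.exp (-t ^ 2) * P t)) :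
    Tendsto (fun x : ℝ => ∫ t in Iic x, Real.exp (-t ^ 2) * P t) atBot (𝓝 0) := by
  have h := tendsto_setIntegral_of_antitone (μ := volume)
    (f := fun t : ℝ => Real.exp (-t ^ 2) * P t) (s := fun n : ℝ => Iic (-n))
    (fun _ => measurableSet_Iic) (fun i j h => Iic_subset_Iic.2 (neg_le_neg h))
    ⟨0, hInt.integrableOn⟩
  have h2 : ⋂ n : ℝ, Iic (-n) = (∅ : Set ℝ) := by
    ext x
    simp only [mem_iInter, mem_Iic, mem_empty_iff_false, iff_false, not_forall, not_le]
    exact ⟨-x + 1, by linarith⟩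
  rw [h2, Measure.restrict_empty, integral_zero_measure] at h
  have := h.comp tendsto_neg_atBot_atTop
  simpa [Function.comp_def] using this

/-- With `P` and `c₁` as before, the set of critical values
`c₁({x | P(x) = 0})` is a discrete and closed subset of the subspace `ℝ ∖ {0, −I}`:
every accumulation point in `ℝ` of the set of critical values lies in `{0, −I}`, and no
critical value is an accumulation point of the set of critical values. -/
theorem stmt12 (P : ℝ → ℝ) (hP : AnalyticOnNhd ℝ P Set.univ)
    (hP0 : ∀ x : ℝ, 0 ≤ P x) (hPne : ∃ x : ℝ, P x ≠ 0)
    (hzero : ¬ BddBelow {x : ℝ | P x = 0})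
    (hInt : Integrable (fun t : ℝ => Real.exp (-t ^ 2) * P t))
    (I : ℝ) (hI : I = ∫ t : ℝ, Real.exp (-t ^ 2) * P t)
    (c₁ : ℝ → ℝ) (hc₁ : ∀ x : ℝ, c₁ x = -∫ t in Set.Iic x, Real.exp (-t ^ 2) * P t) :
    (∀ y : ℝ, AccPt y (𝓟 (c₁ '' {x : ℝ | P x = 0})) → y = 0 ∨ y = -I) ∧
      (∀ y ∈ c₁ '' {x : ℝ | P x = 0}, ¬ AccPt y (𝓟 (c₁ '' {x : ℝ | P x = 0}))) := by
  classical
  set g := fun x : ℝ => ∫ t in Set.Iic x, Real.exp (-t ^ 2) * P t with hg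
  have hgsm : StrictMono g := aux_strict hP hP0 hPne hInt
  have hca : StrictAnti c₁ := by
    intro a b hab
    rw [hc₁ a, hc₁ b]
    exact neg_lt_neg (hgsm hab)
  have hg0 : ∀ x, 0 ≤ g x := fun x =>
    setIntegral_nonneg measurableSet_Iic fun t _ => mul_nonneg (Real.exp_pos _).le (hP0 t)
  have hgI : ∀ x, g x ≤ I := fun x =>
    hI ▸ setIntegral_le_integral hInt (ae_of_all _ fun t => mul_nonneg (Real.exp_pos _).le (hP0 t))
  have hcIcc : ∀ x, c₁ x ∈ Set.Icc (-I) 0 := fun x => by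
    rw [hc₁ x]
    exact ⟨neg_le_neg (hgI x), neg_nonpos.2 (hg0 x)⟩
  set S := c₁ '' {x : ℝ | P x = 0} with hS
  constructor
  · intro y hy
    by_contra hcon
    push_neg at hcon
    obtain ⟨hy0, hyI⟩ := hcon
    have hyIcc : y ∈ Set.Icc (-I) 0 := by
      by_contra hnot
      rw [accPt_iff_nhds] at hy
      obtain ⟨p, ⟨hp1, hp2⟩, _⟩ := hy (Set.Icc (-I) 0)ᶜ (isClosed_Icc.isOpen_compl.mem_nhds hnot)
      obtain ⟨x, _, rfl⟩ := hp2
      exact hp1 (hcIcc x)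
    have hIy : -I < y := lt_of_le_of_ne hyIcc.1 (Ne.symm hyI)
    have hy0' : y < 0 := lt_of_le_of_ne hyIcc.2 hy0
    obtain ⟨a, ha⟩ := ((aux_bot hInt).eventually_lt_const (neg_pos.2 hy0')).exists
    obtain ⟨b, hb⟩ := ((aux_top hInt).eventually_const_lt (show -y < ∫ t : ℝ, Real.exp (-t ^ 2) * P t by rw [← hI]; linarith)).exists
    set a' := min a (b - 1) with ha'
    have ha'lt : g a' < -y := lt_of_le_of_lt (hgsm.monotone (min_le_left _ _)) ha
    have hab : a' < b := lt_of_le_of_lt (min_le_right _ _) (by linarith)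
    have hyU : y ∈ Set.Ioo (c₁ b) (c₁ a') := by
      constructor
      · rw [hc₁ b]; show -(g b) < y; linarith
      · rw [hc₁ a']; show y < -(g a'); linarith
    set F := c₁ '' ({x : ℝ | P x = 0} ∩ Set.Icc a' b) with hF
    have hFfin : F.Finite := (aux_finite hP hPne a' b).image c₁
    have hsub : S ∩ Set.Ioo (c₁ b) (c₁ a') ⊆ F := by
      rintro p ⟨⟨x, hx, rfl⟩, hpU⟩
      refine ⟨x, ⟨hx, ?_, ?_⟩, rfl⟩
      · by_contra hle
        push_neg at hle
        exact absurd hpU.2 (not_lt.2 (hca.antitone hle.le))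
      · by_contra hle
        push_neg at hle
        exact absurd hpU.1 (not_lt.2 (hca.antitone hle.le))
    rw [accPt_iff_nhds] at hy
    have hVnhds : Set.Ioo (c₁ b) (c₁ a') ∩ (F \ {y})ᶜ ∈ 𝓝 y := by
      refine Filter.inter_mem (isOpen_Ioo.mem_nhds hyU) ?_
      refine ((hFfin.diff).isClosed.isOpen_compl.mem_nhds ?_)
      simp
    obtain ⟨p, ⟨⟨hpU, hpC⟩, hpS⟩, hpy⟩ := hy _ hVnhds
    exact hpC ⟨hsub ⟨hpS, hpU⟩, hpy⟩
  · rintro y ⟨z, hz, rfl⟩ hy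
    have hiso := aux_isolated hP hPne z
    rw [eventually_nhdsWithin_iff, Metric.eventually_nhds_iff] at hiso
    obtain ⟨ε, hε, hball⟩ := hiso
    have h1 : z - ε / 2 < z := by linarith
    have h2 : z < z + ε / 2 := by linarith
    have hyU : c₁ z ∈ Set.Ioo (c₁ (z + ε / 2)) (c₁ (z - ε / 2)) := ⟨hca h2, hca h1⟩
    have hsub : S ∩ Set.Ioo (c₁ (z + ε / 2)) (c₁ (z - ε / 2)) ⊆ {c₁ z} := by
      rintro p ⟨⟨x, hx, rfl⟩, hpU⟩
      rcases eq_or_ne x z with rfl | hxz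
      · rfl
      exfalso
      have hdist : ε ≤ |x - z| := by
        by_contra hlt
        push_neg at hlt
        exact hball (by rwa [Real.dist_eq]) hxz hx
      rcases le_abs'.1 hdist with hcase | hcase
      · exact absurd hpU.2 (not_lt.2 (hca.antitone (by linarith)))
      · exact absurd hpU.1 (not_lt.2 (hca.antitone (by linarith)))
    rw [accPt_iff_nhds] at hy
    obtain ⟨p, ⟨hpU, hpS⟩, hpy⟩ := hy _ (isOpen_Ioo.mem_nhds hyU)
    exact hpy (hsub ⟨hpS, hpU⟩)
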